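/- Single-threshold structure of the costate: under the assumptions (P(X₀)-c)h > (r+δ)α and that there exists t₀ ∈ [0,T] with h·∫_{t₀}^T e^{-(r+δ)(s-t₀)}(P(X₀e^{-δs})-c) ds > α, the unique solution (X,u) of the forward-backward system (with u(T)=0) admits a time T* ∈ (0,T) such that u(t) ≥ α for all t ≤ T* and u(t) ≤ α for all t ≥ T*. -/

import Mathlib

open Set Real intervalIntegral

private lemma hasDerivAt_exp_mul (k t : ℝ) :
    HasDerivAt (fun s => Real.exp (k * s)) (k * Real.exp (k * t)) t := by
  have h := ((hasDerivAt_id t).const_mul k).exp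
  simp only [id] at h
  convert h using 1
  ring

private lemma deriv_nonneg_left {u : ℝ → ℝ} {a b m : ℝ} (hab : a < b)
    (hd : HasDerivAt u m b) (hlt : ∀ t ∈ Set.Ico a b, u t < u b) : 0 ≤ m := by
  have h1 : Filter.Tendsto (slope u b) (nhdsWithin b (Set.Iio b)) (nhds m) :=
    (hasDerivAt_iff_tendsto_slope.mp hd).mono_left
      (nhdsWithin_mono _ fun x hx => ne_of_lt hx)
  refine ge_of_tendsto h1 ?_
  filter_upwards [Ioo_mem_nhdsLT_of_mem (Set.mem_Ioc.mpr ⟨hab, le_refl b⟩)] with t ht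
  have h2 : u t - u b ≤ 0 := sub_nonpos.mpr (hlt t ⟨ht.1.le, ht.2⟩).le
  have h3 : t - b ≤ 0 := sub_nonpos.mpr ht.2.le
  rw [slope_def_field]
  exact div_nonneg_iff.mpr (Or.inr ⟨h2, h3⟩)

private lemma deriv_nonpos_right {u : ℝ → ℝ} {d e m : ℝ} (hde : d < e)
    (hd : HasDerivAt u m d) (hlt : ∀ t ∈ Set.Ioc d e, u t < u d) : m ≤ 0 := by
  have h1 : Filter.Tendsto (slope u d) (nhdsWithin d (Set.Ioi d)) (nhds m) :=
    (hasDerivAt_iff_tendsto_slope.mp hd).mono_left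
      (nhdsWithin_mono _ fun x hx => ne_of_gt hx)
  refine le_of_tendsto h1 ?_
  filter_upwards [Ioo_mem_nhdsGT_of_mem (Set.mem_Ico.mpr ⟨le_refl d, hde⟩)] with t ht
  have h2 : u t - u d ≤ 0 := sub_nonpos.mpr (hlt t ⟨ht.1, ht.2.le⟩).le
  have h3 : 0 ≤ t - d := sub_nonneg.mpr ht.1.le
  rw [slope_def_field]
  exact div_nonpos_of_nonpos_of_nonneg h2 h3

private lemma decay_lemma (δ β α : ℝ) (X u : ℝ → ℝ) {a b : ℝ} (hab : a ≤ b)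
    (hd : ∀ t ∈ Set.Icc a b, HasDerivAt X (-δ * X t + (1/β) * max (u t - α) 0) t)
    (hu : ∀ t ∈ Set.Icc a b, u t ≤ α) :
    X b = X a * Real.exp (-δ * (b - a)) := by
  have key : ∀ t ∈ Set.uIcc a b,
      HasDerivAt (fun s => X s * Real.exp (δ * s)) ((fun _ : ℝ => (0:ℝ)) t) t := by
    intro t ht
    rw [Set.uIcc_of_le hab] at ht
    have h1 := hd t ht
    have hmax : max (u t - α) 0 = 0 := max_eq_right (sub_nonpos.mpr (hu t ht))
    have h2 : HasDerivAt (fun s => Real.exp (δ * s)) (δ * Real.exp (δ * t)) t :=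
      hasDerivAt_exp_mul δ t
    have h3 : HasDerivAt (fun s => X s * Real.exp (δ * s)) _ t := h1.mul h2
    convert h3 using 1
    rw [hmax]; ring
  have hint : ∫ _ in a..b, (0:ℝ) = X b * Real.exp (δ * b) - X a * Real.exp (δ * a) :=
    intervalIntegral.integral_eq_sub_of_hasDerivAt key intervalIntegrable_const
  simp only [intervalIntegral.integral_zero] at hint
  have hXb : X b * Real.exp (δ * b) = X a * Real.exp (δ * a) := by linarith
  have hne : Real.exp (δ * b) ≠ 0 := Real.exp_ne_zero _
  rw [show -δ * (b - a) = δ*a - δ*b by ring, Real.exp_sub]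
  field_simp
  linarith

private lemma aux_closed {u : ℝ → ℝ} {a b α : ℝ} (hc : ContinuousOn u (Set.Icc a b)) :
    IsClosed {t | t ∈ Set.Icc a b ∧ α ≤ u t} := by
  have he : {t | t ∈ Set.Icc a b ∧ α ≤ u t} = Set.Icc a b ∩ u ⁻¹' Set.Ici α := rfl
  rw [he]
  exact hc.preimage_isClosed_of_isClosed isClosed_Icc isClosed_Ici

def IsForwardSol (δ β r h α c : ℝ) (P : ℝ → ℝ) (T : ℝ) (X u : ℝ → ℝ) : Prop :=
  ∀ t ∈ Set.Icc (0 : ℝ) T,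
    HasDerivAt X (-δ * X t + (1 / β) * max (u t - α) 0) t ∧
    HasDerivAt u ((r + δ) * u t - (P (X t) - c) * h) t

/-- Under the standing assumption, the solution of the forward-backward
system admits a threshold time `T* ∈ (0,T)` with `u ≥ α` before and `u ≤ α` after. -/
theorem stmt_8 (δ β r h T α c X₀ : ℝ) (hδ : 0 < δ) (hβ : 0 < β) (hr : 0 < r)
    (hh : 0 < h) (hT : 0 < T) (hα : 0 < α) (hX₀ : 0 ≤ X₀)
    (P : ℝ → ℝ) (hP : ∃ L : NNReal, LipschitzWith L P) (hPdec : StrictAnti P)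
    (hassum1 : (P X₀ - c) * h > (r + δ) * α)
    (hassum2 : ∃ t₀ ∈ Set.Icc (0 : ℝ) T,
      h * ∫ s in t₀..T,
        Real.exp (-(r + δ) * (s - t₀)) * (P (X₀ * Real.exp (-δ * s)) - c) > α)
    (X u : ℝ → ℝ)
    (hsol : IsForwardSol δ β r h α c P T X u)
    (hX0 : X 0 = X₀) (huT : u T = 0) :
    ∃ Tstar ∈ Set.Ioo (0 : ℝ) T,
      (∀ t ∈ Set.Icc (0 : ℝ) Tstar, α ≤ u t) ∧
      (∀ t ∈ Set.Icc Tstar T, u t ≤ α) := by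
  obtain ⟨L, hL⟩ := hP
  have hPc : Continuous P := hL.continuous
  have hdX : ∀ t ∈ Icc (0:ℝ) T, HasDerivAt X (-δ * X t + (1/β) * max (u t - α) 0) t :=
    fun t ht => (hsol t ht).1
  have hdu : ∀ t ∈ Icc (0:ℝ) T, HasDerivAt u ((r+δ) * u t - (P (X t) - c) * h) t :=
    fun t ht => (hsol t ht).2
  have huc : ∀ t ∈ Icc (0:ℝ) T, ContinuousAt u t := fun t ht => (hdu t ht).continuousAt
  have hXc : ∀ t ∈ Icc (0:ℝ) T, ContinuousAt X t := fun t ht => (hdX t ht).continuousAt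
  have huco : ContinuousOn u (Icc (0:ℝ) T) := fun t ht => (huc t ht).continuousWithinAt
  have hXco : ContinuousOn X (Icc (0:ℝ) T) := fun t ht => (hXc t ht).continuousWithinAt
  -- Step 1: there exists a point where u > α
  have step1 : ∃ t₂ ∈ Icc (0:ℝ) T, α < u t₂ := by
    by_contra hcon
    push_neg at hcon
    obtain ⟨t₀, ht₀, hI⟩ := hassum2
    have hXeq : ∀ s ∈ Icc (0:ℝ) T, X s = X₀ * Real.exp (-δ * s) := by
      intro s hs
      have hdec := decay_lemma δ β α X u hs.1
        (fun t ht => hdX t ⟨ht.1, ht.2.trans hs.2⟩)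
        (fun t ht => hcon t ⟨ht.1, ht.2.trans hs.2⟩)
      rw [hX0] at hdec
      rw [hdec]
      ring_nf
    have hW : ∀ t ∈ Icc (0:ℝ) T, HasDerivAt (fun s => Real.exp (-(r+δ)*s) * u s)
        (-(Real.exp (-(r+δ)*t) * ((P (X t) - c) * h))) t := by
      intro t ht
      have h2 : HasDerivAt (fun s => Real.exp (-(r+δ)*s)) (-(r+δ) * Real.exp (-(r+δ)*t)) t :=
        hasDerivAt_exp_mul (-(r+δ)) t
      have h3 : HasDerivAt (fun s => Real.exp (-(r+δ)*s) * u s) _ t := h2.mul (hdu t ht)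
      convert h3 using 1
      ring
    have hIcc : Icc t₀ T ⊆ Icc (0:ℝ) T := Icc_subset_Icc ht₀.1 le_rfl
    have huIcc : uIcc t₀ T = Icc t₀ T := uIcc_of_le ht₀.2
    have hFTC : ∫ s in t₀..T, -(Real.exp (-(r+δ)*s) * ((P (X s) - c) * h))
        = Real.exp (-(r+δ)*T) * u T - Real.exp (-(r+δ)*t₀) * u t₀ := by
      apply intervalIntegral.integral_eq_sub_of_hasDerivAt
      · intro t ht; rw [huIcc] at ht; exact hW t (hIcc ht)
      · apply ContinuousOn.intervalIntegrable
        rw [huIcc]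
        apply ContinuousOn.neg
        exact (Real.continuous_exp.comp (continuous_const.mul continuous_id)).continuousOn.mul
          (((hPc.comp_continuousOn (hXco.mono hIcc)).sub continuousOn_const).mul continuousOn_const)
    have hInt : ∫ s in t₀..T, Real.exp (-(r+δ)*s) * ((P (X s) - c) * h)
        = Real.exp (-(r+δ)*t₀) * u t₀ := by
      rw [intervalIntegral.integral_neg] at hFTC
      rw [huT, mul_zero, zero_sub] at hFTC
      linarith
    have hInt' : (∫ s in t₀..T, Real.exp (-(r+δ)*s) * (P (X s) - c)) * h
        = Real.exp (-(r+δ)*t₀) * u t₀ := by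
      rw [← intervalIntegral.integral_mul_const, ← hInt]
      apply intervalIntegral.integral_congr
      intro s hs
      dsimp
      ring
    have hcongr : ∀ s ∈ uIcc t₀ T,
        Real.exp (-(r+δ)*(s - t₀)) * (P (X₀ * Real.exp (-δ * s)) - c)
        = Real.exp ((r+δ)*t₀) * (Real.exp (-(r+δ)*s) * (P (X s) - c)) := by
      intro s hs
      rw [huIcc] at hs
      rw [← hXeq s (hIcc hs)]
      rw [show -(r+δ)*(s-t₀) = (r+δ)*t₀ + (-(r+δ)*s) by ring, Real.exp_add, mul_assoc]
    have hIval : (∫ s in t₀..T, Real.exp (-(r+δ)*(s - t₀)) * (P (X₀ * Real.exp (-δ * s)) - c))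
        = Real.exp ((r+δ)*t₀) * ∫ s in t₀..T, Real.exp (-(r+δ)*s) * (P (X s) - c) := by
      rw [intervalIntegral.integral_congr hcongr, intervalIntegral.integral_const_mul]
    have hfin : h * (∫ s in t₀..T,
        Real.exp (-(r+δ)*(s - t₀)) * (P (X₀ * Real.exp (-δ * s)) - c)) = u t₀ := by
      rw [hIval, show h * (Real.exp ((r+δ)*t₀) * ∫ s in t₀..T,
            Real.exp (-(r+δ)*s) * (P (X s) - c))
          = Real.exp ((r+δ)*t₀) * ((∫ s in t₀..T, Real.exp (-(r+δ)*s) * (P (X s) - c)) * h)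
          by ring, hInt', ← mul_assoc, ← Real.exp_add,
        show (r+δ)*t₀ + -(r+δ)*t₀ = 0 by ring, Real.exp_zero, one_mul]
    rw [hfin] at hI
    linarith [hcon t₀ ht₀]
  obtain ⟨t₂, ht₂mem, ht₂⟩ := step1
  set S := {t | t ∈ Icc (0:ℝ) T ∧ α ≤ u t} with hSdef
  have hSne : S.Nonempty := ⟨t₂, ht₂mem, ht₂.le⟩
  have hSclosed : IsClosed S := aux_closed huco
  have hScompact : IsCompact S := isCompact_Icc.of_isClosed_subset hSclosed (fun t ht => ht.1)
  set Tstar := sSup S with hTdef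
  have hTmem : Tstar ∈ S := hScompact.sSup_mem hSne
  have hTge0 : 0 ≤ Tstar := hTmem.1.1
  have hTle : Tstar ≤ T := hTmem.1.2
  have hTlt : Tstar < T := by
    rcases eq_or_lt_of_le hTle with he | h
    · exfalso; have := hTmem.2; rw [he, huT] at this; linarith
    · exact h
  have hTpos : 0 < Tstar := by
    rcases eq_or_lt_of_le ht₂mem.1 with he | hlt
    · -- t₂ = 0, u 0 > α
      rw [← he] at ht₂
      have hctu : Filter.Tendsto u (nhdsWithin 0 (Set.Ioi 0)) (nhds (u 0)) :=
        (huc 0 ⟨le_rfl, hT.le⟩).tendsto.mono_left nhdsWithin_le_nhds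
      have hev1 : ∀ᶠ s in nhdsWithin 0 (Set.Ioi 0), α < u s := hctu (Ioi_mem_nhds ht₂)
      have hev2 : Ioo (0:ℝ) T ∈ nhdsWithin 0 (Set.Ioi 0) :=
        Ioo_mem_nhdsGT_of_mem ⟨le_rfl, hT⟩
      obtain ⟨s, hs1, hs2⟩ := (hev1.and hev2).exists
      have hsS : s ∈ S := ⟨⟨hs2.1.le, hs2.2.le⟩, hs1.le⟩
      exact lt_of_lt_of_le hs2.1 (le_csSup hScompact.bddAbove hsS)
    · exact lt_of_lt_of_le hlt (le_csSup hScompact.bddAbove ⟨ht₂mem, ht₂.le⟩)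
  -- everything right of Tstar is below α
  have hright : ∀ s, Tstar < s → s ≤ T → u s < α := by
    intro s hs1 hs2
    by_contra hge; push_neg at hge
    have : s ∈ S := ⟨⟨hTge0.trans hs1.le, hs2⟩, hge⟩
    have := le_csSup hScompact.bddAbove this
    linarith
  have partC : ∀ t ∈ Icc Tstar T, u t ≤ α := by
    intro t ht
    rcases eq_or_lt_of_le ht.1 with he | hlt
    · rw [← he]
      have hct : Filter.Tendsto u (nhdsWithin Tstar (Set.Ioi Tstar)) (nhds (u Tstar)) :=
        (huc Tstar ⟨hTge0, hTle⟩).tendsto.mono_left nhdsWithin_le_nhds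
      refine le_of_tendsto hct ?_
      filter_upwards [Ioo_mem_nhdsGT_of_mem (Set.mem_Ico.mpr ⟨le_rfl, hTlt⟩)] with s hs
      exact (hright s hs.1 hs.2.le).le
    · exact (hright t hlt ht.2).le
  have partB : ∀ t ∈ Icc (0:ℝ) Tstar, α ≤ u t := by
    by_contra hcon; push_neg at hcon
    obtain ⟨t₁, ht₁mem, ht₁⟩ := hcon
    have ht₁T : t₁ ∈ Icc (0:ℝ) T := ⟨ht₁mem.1, ht₁mem.2.trans hTle⟩
    have ht₁lt : t₁ < Tstar := by
      rcases eq_or_lt_of_le ht₁mem.2 with he | h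
      · exfalso; rw [he] at ht₁; linarith [hTmem.2]
      · exact h
    set B := {t | t ∈ Icc t₁ Tstar ∧ α ≤ u t} with hBdef
    have hBsub : Icc t₁ Tstar ⊆ Icc (0:ℝ) T := Icc_subset_Icc ht₁mem.1 hTle
    have hBclosed : IsClosed B := aux_closed (huco.mono hBsub)
    have hBcompact : IsCompact B := isCompact_Icc.of_isClosed_subset hBclosed (fun t ht => ht.1)
    have hBne : B.Nonempty := ⟨Tstar, ⟨ht₁lt.le, le_rfl⟩, hTmem.2⟩
    set b := sInf B with hbdef
    have hbmem : b ∈ B := hBcompact.sInf_mem hBne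
    have hbt₁ : t₁ < b := by
      rcases eq_or_lt_of_le hbmem.1.1 with he | h
      · exfalso; rw [← he] at hbmem; linarith [hbmem.2]
      · exact h
    have hblt : ∀ t ∈ Ico t₁ b, u t < α := by
      intro t ht
      by_contra hge; push_neg at hge
      have : t ∈ B := ⟨⟨ht.1, ht.2.le.trans hbmem.1.2⟩, hge⟩
      have := csInf_le hBcompact.bddBelow this
      linarith [ht.2]
    have hbT : b ∈ Icc (0:ℝ) T := hBsub hbmem.1
    have hub_le : u b ≤ α := by
      have hct : Filter.Tendsto u (nhdsWithin b (Set.Iio b)) (nhds (u b)) :=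
        (huc b hbT).tendsto.mono_left nhdsWithin_le_nhds
      refine le_of_tendsto hct ?_
      filter_upwards [Ioo_mem_nhdsLT_of_mem (Set.mem_Ioc.mpr ⟨hbt₁, le_rfl⟩)] with s hs
      exact (hblt s ⟨hs.1.le, hs.2⟩).le
    have hub : u b = α := le_antisymm hub_le hbmem.2
    have hmb : 0 ≤ (r+δ) * u b - (P (X b) - c) * h := by
      apply deriv_nonneg_left hbt₁ (hdu b hbT)
      intro t ht; rw [hub]; exact hblt t ht
    rw [hub] at hmb
    have hPXb : (P (X b) - c) * h ≤ (r+δ) * α := by linarith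
    have hXbgt : X₀ < X b := by
      by_contra hle; push_neg at hle
      have hPle : P X₀ ≤ P (X b) := hPdec.antitone hle
      have := mul_le_mul_of_nonneg_right (sub_le_sub_right hPle c) hh.le
      linarith
    set B' := {t | t ∈ Icc (0:ℝ) t₁ ∧ α ≤ u t} with hB'def
    by_cases hB' : B'.Nonempty
    · -- there is an earlier crossing: downcrossing at d
      have hB'closed : IsClosed B' := aux_closed (huco.mono (Icc_subset_Icc le_rfl ht₁T.2))
      have hB'compact : IsCompact B' :=
        isCompact_Icc.of_isClosed_subset hB'closed (fun t ht => ht.1)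
      set d := sSup B' with hddef
      have hdmem : d ∈ B' := hB'compact.sSup_mem hB'
      have hdt₁ : d < t₁ := by
        rcases eq_or_lt_of_le hdmem.1.2 with he | h
        · exfalso; rw [he] at hdmem; linarith [hdmem.2]
        · exact h
      have hdT : d ∈ Icc (0:ℝ) T := ⟨hdmem.1.1, hdmem.1.2.trans ht₁T.2⟩
      have hdlt : ∀ t ∈ Ioc d t₁, u t < α := by
        intro t ht
        by_contra hge; push_neg at hge
        have : t ∈ B' := ⟨⟨hdmem.1.1.trans ht.1.le, ht.2⟩, hge⟩
        have := le_csSup hB'compact.bddAbove this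
        linarith [ht.1]
      have hud_le : u d ≤ α := by
        have hct : Filter.Tendsto u (nhdsWithin d (Set.Ioi d)) (nhds (u d)) :=
          (huc d hdT).tendsto.mono_left nhdsWithin_le_nhds
        refine le_of_tendsto hct ?_
        filter_upwards [Ioo_mem_nhdsGT_of_mem (Set.mem_Ico.mpr ⟨le_rfl, hdt₁⟩)] with s hs
        exact (hdlt s ⟨hs.1, hs.2.le⟩).le
      have hud : u d = α := le_antisymm hud_le hdmem.2
      have hmd : (r+δ) * u d - (P (X d) - c) * h ≤ 0 := by
        apply deriv_nonpos_right hdt₁ (hdu d hdT)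
        intro t ht; rw [hud]; exact hdlt t ht
      rw [hud] at hmd
      have hXdb : X d ≤ X b := by
        by_contra hgt; push_neg at hgt
        have hPlt : P (X d) < P (X b) := hPdec hgt
        have := mul_lt_mul_of_pos_right (sub_lt_sub_right hPlt c) hh
        linarith
      have hdb : d ≤ b := (hdt₁.trans hbt₁).le
      have huab : ∀ t ∈ Icc d b, u t ≤ α := by
        intro t ht
        rcases eq_or_lt_of_le ht.1 with he | hlt1
        · rw [← he, hud]
        rcases eq_or_lt_of_le ht.2 with he2 | hlt2
        · rw [he2, hub]
        rcases le_or_gt t t₁ with hc | hc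
        · exact (hdlt t ⟨hlt1, hc⟩).le
        · exact (hblt t ⟨hc.le, hlt2⟩).le
      have hXdecay := decay_lemma δ β α X u hdb
        (fun t ht => hdX t ⟨hdT.1.trans ht.1, ht.2.trans hbT.2⟩) huab
      have hXdpos : 0 < X d := by
        by_contra hle; push_neg at hle
        nlinarith [Real.exp_pos (-δ * (b - d))]
      have hexp : Real.exp (-δ * (b - d)) < 1 := by
        rw [Real.exp_lt_one_iff]
        nlinarith [hbt₁, hdt₁]
      have hprod : X d * Real.exp (-δ * (b - d)) < X d * 1 :=
        mul_lt_mul_of_pos_left hexp hXdpos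
      rw [mul_one] at hprod
      linarith
    · -- no earlier crossing: u < α on all of [0, b)
      have hA : ∀ t ∈ Icc (0:ℝ) t₁, u t < α := by
        intro t ht
        by_contra hge; push_neg at hge
        exact hB' ⟨t, ht, hge⟩
      have huab : ∀ t ∈ Icc (0:ℝ) b, u t ≤ α := by
        intro t ht
        rcases eq_or_lt_of_le ht.2 with he | hlt
        · rw [he, hub]
        rcases le_or_gt t t₁ with hc | hc
        · exact (hA t ⟨ht.1, hc⟩).le
        · exact (hblt t ⟨hc.le, hlt⟩).le
      have hXdecay := decay_lemma δ β α X u hbT.1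
        (fun t ht => hdX t ⟨ht.1, ht.2.trans hbT.2⟩) huab
      rw [hX0] at hXdecay
      have hexple : Real.exp (-δ * (b - 0)) ≤ 1 := by
        rw [Real.exp_le_one_iff]
        nlinarith [hbT.1]
      have hprod : X₀ * Real.exp (-δ * (b - 0)) ≤ X₀ * 1 :=
        mul_le_mul_of_nonneg_left hexple hX₀
      rw [mul_one] at hprod
      linarith
  exact ⟨Tstar, ⟨hTpos, hTlt⟩, partB, partC⟩
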